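/- Let h: ℕ→ℕ be a strictly increasing function, β < ε₀ an ordinal, and x₀ ∈ ℕ such that h(x) ≤ F_β(x) for all x ≥ x₀. Then for every ordinal α < ε₀ and every x ≥ x₀, F_{h,α}(x) ≤ F_{F_β,α}(x), where F_{F_β,α} is the relativized fast-growing hierarchy with base function F_β. -/

import Mathlib

open ONote Ordinal

/-- The relativized fast-growing hierarchy `F_{h,α}`, indexed by ordinal notations `< ε₀`:
`F_{h,0} = h`, `F_{h,α+1}(x) = F_{h,α}^[x+1](x)`, and `F_{h,λ}(x) = F_{h,λ(x)}(x)` for `λ` a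
limit, using the standard assignment of fundamental sequences.  The (standard) fast-growing
hierarchy `F_α` of the paper is recovered as `FGH Nat.succ`. -/
def FGH (h : ℕ → ℕ) : ONote → ℕ → ℕ
  | o =>
    match fundamentalSequence o, fundamentalSequence_has_prop o with
    | Sum.inl none, _ => h
    | Sum.inl (some a), hp =>
      have : a < o := by rw [lt_def, hp.1]; exact Order.lt_succ _
      fun i => (FGH h a)^[i + 1] i
    | Sum.inr f, hp => fun i =>
      have : f i < o := (hp.2.1 i).2.1
      FGH h (f i) i
  termination_by o => o

/-! ### Auxiliary facts about `fundamentalSequence` -/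

theorem fs_zero : fundamentalSequence (0:ONote) = Sum.inl none := rfl

theorem fs_zero' : fundamentalSequence ONote.zero = Sum.inl none := rfl

theorem eq_zero_of_fs {b : ONote} (e : fundamentalSequence b = Sum.inl none) : b = 0 := by
  have hp := fundamentalSequence_has_prop b
  rwa [e] at hp

theorem lt_of_fs_succ {b c : ONote} (e : fundamentalSequence b = Sum.inl (some c)) : c < b := by
  have hp := fundamentalSequence_has_prop b
  rw [e] at hp
  rw [lt_def, hp.1]
  exact Order.lt_succ _

theorem lt_of_fs_lim {b : ONote} {f} (e : fundamentalSequence b = Sum.inr f) (i : ℕ) :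
    f i < b := by
  have hp := fundamentalSequence_has_prop b
  rw [e] at hp
  exact (hp.2.1 i).2.1

theorem fs_tail_inr {b : ONote} {fb} (eb : fundamentalSequence b = Sum.inr fb) (a : ONote)
    (n : ℕ+) : fundamentalSequence (oadd a n b) = Sum.inr fun i => oadd a n (fb i) := by
  rw [fundamentalSequence, eb]

theorem fs_tail_succ {b : ONote} {b'} (eb : fundamentalSequence b = Sum.inl (some b'))
    (a : ONote) (n : ℕ+) :
    fundamentalSequence (oadd a n b) = Sum.inl (some (oadd a n b')) := by
  rw [fundamentalSequence, eb]

theorem fs_exp_succ_one {a : ONote} {a'} (ea : fundamentalSequence a = Sum.inl (some a')) :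
    fundamentalSequence (oadd a 1 0) = Sum.inr fun i => oadd a' i.succPNat 0 := by
  rw [fundamentalSequence, ea, fs_zero]
  rfl

theorem fs_exp_succ_many {a : ONote} {a'} (ea : fundamentalSequence a = Sum.inl (some a'))
    (k : ℕ) : fundamentalSequence (oadd a (k+1).succPNat 0)
      = Sum.inr fun i => oadd a k.succPNat (oadd a' i.succPNat 0) := by
  rw [fundamentalSequence, ea, fs_zero]
  simp [Nat.natPred_succPNat]

theorem fs_exp_lim_one {a : ONote} {g} (ea : fundamentalSequence a = Sum.inr g) :
    fundamentalSequence (oadd a 1 0) = Sum.inr fun i => oadd (g i) 1 0 := by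
  rw [fundamentalSequence, ea, fs_zero]
  rfl

theorem fs_exp_lim_many {a : ONote} {g} (ea : fundamentalSequence a = Sum.inr g)
    (k : ℕ) : fundamentalSequence (oadd a (k+1).succPNat 0)
      = Sum.inr fun i => oadd a k.succPNat (oadd (g i) 1 0) := by
  rw [fundamentalSequence, ea, fs_zero]
  simp [Nat.natPred_succPNat]

theorem fs_one : fundamentalSequence (oadd 0 1 0) = Sum.inl (some 0) := rfl

theorem fs_nat (k : ℕ) : fundamentalSequence (oadd 0 (k+1).succPNat 0)
      = Sum.inl (some (oadd 0 k.succPNat 0)) := by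
  rw [fundamentalSequence, fs_zero]
  simp [Nat.natPred_succPNat]

/-! ### The step-down relation -/

/-- `StepDown n a b` : `a` is obtained from `b` by one step down, either taking the
predecessor of a successor, or an element of index `≤ n` of the fundamental sequence
of a limit. -/
def StepDown (n : ℕ) (a b : ONote) : Prop :=
  fundamentalSequence b = Sum.inl (some a) ∨
    ∃ f j, fundamentalSequence b = Sum.inr f ∧ j ≤ n ∧ a = f j

/-- `SD n` is the reflexive transitive closure of `StepDown n`. -/
def SD (n : ℕ) : ONote → ONote → Prop := Relation.ReflTransGen (StepDown n)

theorem StepDown.mono {k k' : ℕ} (hk : k ≤ k') {a b : ONote} (h : StepDown k a b) :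
    StepDown k' a b := by
  rcases h with h | ⟨f, j, hf, hj, rfl⟩
  · exact Or.inl h
  · exact Or.inr ⟨f, j, hf, hj.trans hk, rfl⟩

theorem SD.mono {k k' : ℕ} (hk : k ≤ k') {a b : ONote} (h : SD k a b) : SD k' a b :=
  Relation.ReflTransGen.mono (fun _ _ h' => h'.mono hk) _ _ h

theorem stepDown_oadd_lift {k : ℕ} {a b : ONote} (h : StepDown k a b) (e0 : ONote) (n : ℕ+) :
    StepDown k (oadd e0 n a) (oadd e0 n b) := by
  rcases h with h | ⟨f, j, hf, hj, rfl⟩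
  · exact Or.inl (fs_tail_succ h e0 n)
  · exact Or.inr ⟨_, j, fs_tail_inr hf e0 n, hj, rfl⟩

theorem stepDown_exp_lift {k : ℕ} {a b : ONote} (h : StepDown k a b) :
    StepDown k (oadd a 1 0) (oadd b 1 0) := by
  rcases h with h | ⟨f, j, hf, hj, rfl⟩
  · exact Or.inr ⟨_, 0, fs_exp_succ_one h, Nat.zero_le _, rfl⟩
  · exact Or.inr ⟨_, j, fs_exp_lim_one hf, hj, rfl⟩

theorem sd_oadd_lift {k : ℕ} {a b : ONote} (h : SD k a b) (e0 : ONote) (n : ℕ+) :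
    SD k (oadd e0 n a) (oadd e0 n b) :=
  Relation.ReflTransGen.lift (fun c => oadd e0 n c) (fun _ _ h' => stepDown_oadd_lift h' e0 n) _ _ h

theorem sd_exp_lift {k : ℕ} {a b : ONote} (h : SD k a b) :
    SD k (oadd a 1 0) (oadd b 1 0) :=
  Relation.ReflTransGen.lift (fun c => oadd c 1 0) (fun _ _ h' => stepDown_exp_lift h') _ _ h

/-- Any tail can be stepped away with index-0 steps. -/
theorem SD_oadd_tail (a : ONote) (n : ℕ+) (c : ONote) : SD 0 (oadd a n 0) (oadd a n c) := by
  rcases e : fundamentalSequence c with (_|c')|g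
  · obtain rfl := eq_zero_of_fs e
    exact Relation.ReflTransGen.refl
  · have hc : c' < c := lt_of_fs_succ e
    exact (SD_oadd_tail a n c').tail (Or.inl (fs_tail_succ e a n))
  · have hc : g 0 < c := lt_of_fs_lim e 0
    exact (SD_oadd_tail a n (g 0)).tail (Or.inr ⟨_, 0, fs_tail_inr e a n, le_rfl, rfl⟩)
termination_by c

theorem SD_drop (e : ONote) (k : ℕ) :
    SD 0 (oadd e k.succPNat 0) (oadd e (k+1).succPNat 0) := by
  rcases he : fundamentalSequence e with (_|e')|g
  · obtain rfl := eq_zero_of_fs he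
    exact Relation.ReflTransGen.single (Or.inl (fs_nat k))
  · exact (SD_oadd_tail e k.succPNat (oadd e' (Nat.succPNat 0) 0)).tail
      (Or.inr ⟨_, 0, fs_exp_succ_many he k, le_rfl, rfl⟩)
  · exact (SD_oadd_tail e k.succPNat (oadd (g 0) 1 0)).tail
      (Or.inr ⟨_, 0, fs_exp_lim_many he k, le_rfl, rfl⟩)

/-- The Bachmann-type property of the standard fundamental sequences. -/
theorem SD_fs : ∀ (o : ONote) {f}, fundamentalSequence o = Sum.inr f →
    ∀ m : ℕ, SD m (f m) (f (m+1)) := by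
  intro o
  induction o with
  | zero => intro f e m; rw [fs_zero'] at e; cases e
  | oadd a n b iha ihb =>
    intro f e m
    rcases eb : fundamentalSequence b with (_|b')|fb
    · obtain rfl := eq_zero_of_fs eb
      have hn := PNat.succPNat_natPred n
      rcases en : n.natPred with _ | k <;> rw [en] at hn <;> subst hn
      · -- n = 1
        rw [show Nat.succPNat 0 = 1 from rfl] at e
        rcases ea : fundamentalSequence a with (_|a')|g
        · obtain rfl := eq_zero_of_fs ea
          rw [fs_one] at e; cases e
        · rw [fs_exp_succ_one ea] at e
          obtain rfl := (Sum.inr.inj e)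
          exact SD.mono (Nat.zero_le m) (SD_drop a' m)
        · rw [fs_exp_lim_one ea] at e
          obtain rfl := (Sum.inr.inj e)
          exact sd_exp_lift (iha ea m)
      · -- n = (k+1).succPNat
        rcases ea : fundamentalSequence a with (_|a')|g
        · obtain rfl := eq_zero_of_fs ea
          rw [fs_nat k] at e; cases e
        · rw [fs_exp_succ_many ea k] at e
          obtain rfl := (Sum.inr.inj e)
          exact sd_oadd_lift (SD.mono (Nat.zero_le m) (SD_drop a' m)) a k.succPNat
        · rw [fs_exp_lim_many ea k] at e
          obtain rfl := (Sum.inr.inj e)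
          exact sd_oadd_lift (sd_exp_lift (iha ea m)) a k.succPNat
    · rw [fs_tail_succ eb a n] at e; cases e
    · rw [fs_tail_inr eb a n] at e
      obtain rfl := (Sum.inr.inj e)
      exact sd_oadd_lift (ihb eb m) a n

theorem SD_fs_le {o : ONote} {f} (e : fundamentalSequence o = Sum.inr f) {j x : ℕ}
    (hjx : j ≤ x) : SD x (f j) (f x) := by
  induction x, hjx using Nat.le_induction with
  | base => exact Relation.ReflTransGen.refl
  | succ x hx ih =>
    exact Relation.ReflTransGen.trans (SD.mono (Nat.le_succ x) ih)
      (SD.mono (Nat.le_succ x) (SD_fs o e x))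

/-! ### Basic properties of `FGH` -/

theorem FGH_def (h : ℕ → ℕ) {o : ONote} {x} (e : fundamentalSequence o = x) :
    FGH h o =
      match (motive := (x : Option ONote ⊕ (ℕ → ONote)) → FundamentalSequenceProp o x → ℕ → ℕ)
        x, e ▸ fundamentalSequence_has_prop o with
      | Sum.inl none, _ => h
      | Sum.inl (some a), _ => fun i => (FGH h a)^[i + 1] i
      | Sum.inr f, _ => fun i => FGH h (f i) i := by
  subst x
  rw [FGH]

theorem FGH_zero' (h : ℕ → ℕ) (o : ONote) (e : fundamentalSequence o = Sum.inl none) :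
    FGH h o = h := by
  rw [FGH_def h e]

theorem FGH_succ' (h : ℕ → ℕ) (o : ONote) {a} (e : fundamentalSequence o = Sum.inl (some a)) :
    FGH h o = fun i => (FGH h a)^[i + 1] i := by
  rw [FGH_def h e]

theorem FGH_limit' (h : ℕ → ℕ) (o : ONote) {f} (e : fundamentalSequence o = Sum.inr f) :
    FGH h o = fun i => FGH h (f i) i := by
  rw [FGH_def h e]

theorem iter_le {F : ℕ → ℕ} (hF : ∀ z, z ≤ F z) : ∀ (k x : ℕ), x ≤ F^[k] x
  | 0, _ => le_rfl
  | k+1, x => by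
    rw [Function.iterate_succ_apply]
    exact (hF x).trans (iter_le hF k (F x))

theorem le_FGH (g : ℕ → ℕ) (hg : ∀ z, z ≤ g z) (a : ONote) (x : ℕ) : x ≤ FGH g a x := by
  rcases e : fundamentalSequence a with (_|a')|f
  · rw [FGH_zero' g a e]; exact hg x
  · have ha : a' < a := lt_of_fs_succ e
    rw [FGH_succ' g a e]
    exact iter_le (fun z => le_FGH g hg a' z) (x+1) x
  · have ha : f x < a := lt_of_fs_lim e x
    rw [FGH_limit' g a e]
    exact le_FGH g hg (f x) x
termination_by a

theorem FGH_le_of_SD (g : ℕ → ℕ) (hg : ∀ z, z ≤ g z) (n x : ℕ) (hnx : n ≤ x)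
    (a b : ONote) (hab : SD n a b) : FGH g a x ≤ FGH g b x := by
  rcases hab.cases_tail with rfl | ⟨c, hac, hcb⟩
  · exact le_rfl
  · rcases hcb with hs | ⟨f, j, hf, hj, rfl⟩
    · have hc : c < b := lt_of_fs_succ hs
      have h1 : FGH g a x ≤ FGH g c x := FGH_le_of_SD g hg n x hnx a c hac
      rw [FGH_succ' g b hs]
      refine h1.trans ?_
      show FGH g c x ≤ (FGH g c)^[x+1] x
      rw [Function.iterate_succ_apply]
      exact iter_le (le_FGH g hg c) x (FGH g c x)
    · have hb : f x < b := lt_of_fs_lim hf x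
      rw [FGH_limit' g b hf]
      have hsd : SD x a (f x) :=
        Relation.ReflTransGen.trans (SD.mono hnx hac) (SD_fs_le hf (hj.trans hnx))
      exact FGH_le_of_SD g hg x x le_rfl a (f x) hsd
termination_by b

theorem FGH_mono (g : ℕ → ℕ) (hg : ∀ z, z ≤ g z) (hg2 : Monotone g) (a : ONote) :
    Monotone (FGH g a) := by
  rcases e : fundamentalSequence a with (_|a')|f
  · rw [FGH_zero' g a e]; exact hg2
  · have ha : a' < a := lt_of_fs_succ e
    have hm : Monotone (FGH g a') := FGH_mono g hg hg2 a'
    intro x y hxy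
    rw [FGH_succ' g a e]
    show (FGH g a')^[x+1] x ≤ (FGH g a')^[y+1] y
    calc (FGH g a')^[x+1] x ≤ (FGH g a')^[x+1] y := hm.iterate (x+1) hxy
      _ ≤ (FGH g a')^[y - x] ((FGH g a')^[x+1] y) := iter_le (le_FGH g hg a') (y - x) _
      _ = (FGH g a')^[y+1] y := by
          rw [← Function.iterate_add_apply]
          congr 1
          omega
  · intro x y hxy
    rw [FGH_limit' g a e]
    have ha : f x < a := lt_of_fs_lim e x
    have h1 : FGH g (f x) x ≤ FGH g (f x) y := FGH_mono g hg hg2 (f x) hxy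
    have h2 : FGH g (f x) y ≤ FGH g (f y) y :=
      FGH_le_of_SD g hg y y le_rfl _ _ (SD_fs_le e hxy)
    exact h1.trans h2
termination_by a

theorem FGH_le_FGH (h g : ℕ → ℕ) (hh : ∀ z, z ≤ h z) (hg : ∀ z, z ≤ g z) (hg2 : Monotone g)
    (x₀ : ℕ) (hle : ∀ z, x₀ ≤ z → h z ≤ g z) (α : ONote) (x : ℕ) (hx : x₀ ≤ x) :
    FGH h α x ≤ FGH g α x := by
  rcases e : fundamentalSequence α with (_|a')|f
  · rw [FGH_zero' h α e, FGH_zero' g α e]; exact hle x hx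
  · have ha : a' < α := lt_of_fs_succ e
    rw [FGH_succ' h α e, FGH_succ' g α e]
    show (FGH h a')^[x+1] x ≤ (FGH g a')^[x+1] x
    have key : ∀ k, x₀ ≤ (FGH h a')^[k] x ∧ (FGH h a')^[k] x ≤ (FGH g a')^[k] x := by
      intro k
      induction k with
      | zero => exact ⟨hx, le_rfl⟩
      | succ k ih =>
        rw [Function.iterate_succ_apply', Function.iterate_succ_apply']
        refine ⟨ih.1.trans (le_FGH h hh a' _), ?_⟩
        exact (FGH_le_FGH h g hh hg hg2 x₀ hle a' _ ih.1).trans (FGH_mono g hg hg2 a' ih.2)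
    exact (key (x+1)).2
  · have ha : f x < α := lt_of_fs_lim e x
    rw [FGH_limit' h α e, FGH_limit' g α e]
    exact FGH_le_FGH h g hh hg hg2 x₀ hle (f x) x hx
termination_by α

/-- Let `h : ℕ → ℕ` be strictly increasing, `β < ε₀` and `x₀ ∈ ℕ` be such that
`h(x) ≤ F_β(x)` for all `x ≥ x₀`.  Then for every `α < ε₀` and every `x ≥ x₀`,
`F_{h,α}(x) ≤ F_{F_β,α}(x)`. -/
theorem relativized_fastGrowing_le_of_base_le (h : ℕ → ℕ) (hh : StrictMono h) (β : ONote)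
    (hNFβ : β.NF) (x₀ : ℕ) (hle : ∀ x, x₀ ≤ x → h x ≤ FGH Nat.succ β x)
    (α : ONote) (hNFα : α.NF) (x : ℕ) (hx : x₀ ≤ x) :
    FGH h α x ≤ FGH (FGH Nat.succ β) α x :=
  FGH_le_FGH h (FGH Nat.succ β) (fun _ => hh.le_apply)
    (le_FGH Nat.succ (fun z => Nat.le_succ z) β)
    (FGH_mono Nat.succ (fun z => Nat.le_succ z) (fun _ _ hab => Nat.succ_le_succ hab) β)
    x₀ hle α x hx
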